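/- If a digraph D has chromatic number at least k, then D contains a directed path with k vertices. -/

import Mathlib

universe u

section Defs
variable {V : Type u}

/-- `l` is a directed path from `x` to `y` in the digraph with arc relation `A`. -/
def DiPath (A : V → V → Prop) (x y : V) (l : List V) : Prop :=
  l.Chain' A ∧ l.Nodup ∧ l.head? = some x ∧ l.getLast? = some y

/-- The internal vertices of a path given as a list. -/
def internals (l : List V) : List V := l.tail.dropLast

/-- `(a,b)` is an arc of the directed cycle represented by the list `l`. -/
def cycArc (l : List V) (a b : V) : Prop :=
  (a, b) ∈ l.zip l.tail ∨ (l.getLast? = some a ∧ l.head? = some b)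

/-- `l` represents a directed cycle of the digraph with arc relation `A`;
its length (number of arcs = number of vertices) is `l.length`. -/
def DiCycle (A : V → V → Prop) (l : List V) : Prop :=
  l ≠ [] ∧ l.Chain' A ∧ l.Nodup ∧
    ∀ a b, l.getLast? = some a → l.head? = some b → A a b

/-- A digraph is strongly connected. -/
def StrongConn (A : V → V → Prop) : Prop := ∀ x y : V, ∃ l, DiPath A x y l

/-- The chromatic number of a digraph: that of its underlying undirected graph. -/
noncomputable def dchrom (A : V → V → Prop) : ℕ∞ :=
  (SimpleGraph.fromRel A).chromaticNumber

/-- Two paths are internally disjoint. -/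
def IntDisj (P Q : List V) : Prop :=
  (∀ v ∈ internals P, v ∉ internals Q) ∧ (∀ v ∈ internals Q, v ∉ internals P)

/-- `D` contains a subdivision of the bispindle `B(k1,k2;k3)`: vertices `x`, `y`
and three pairwise internally disjoint dipaths, two from `x` to `y` of lengths
at least `k1` and `k2`, and one from `y` to `x` of length at least `k3`. -/
def SubdivB (A : V → V → Prop) (k1 k2 k3 : ℕ) : Prop :=
  ∃ (x y : V) (P1 P2 P3 : List V),
    DiPath A x y P1 ∧ DiPath A x y P2 ∧ DiPath A y x P3 ∧
    k1 + 1 ≤ P1.length ∧ k2 + 1 ≤ P2.length ∧ k3 + 1 ≤ P3.length ∧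
    P1 ≠ P2 ∧ IntDisj P1 P2 ∧ IntDisj P1 P3 ∧ IntDisj P2 P3

/-- The length of the subpath of the cycle `l` from `a` to `b` (number of arcs). -/
def cycDist [DecidableEq V] (l : List V) (a b : V) : ℕ :=
  (l.rotate (l.idxOf a)).idxOf b

/-- The subpath (vertex list) of the cycle `l` from `a` to `b`. -/
def cycSub [DecidableEq V] (l : List V) (a b : V) : List V :=
  (l.rotate (l.idxOf a)).take (cycDist l a b + 1)

/-- The intersection of the cycles `Ci` and `Cj` is the common directed subpath
from `a` to `b`, having at most `k` vertices. -/
def InterPath [DecidableEq V] (k : ℕ) (Ci Cj : List V) (a b : V) : Prop :=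
  a ∈ Ci ∧ b ∈ Cj ∧ (∀ x, (x ∈ Ci ∧ x ∈ Cj) ↔ x ∈ cycSub Ci a b) ∧
  cycSub Ci a b = cycSub Cj a b ∧ (cycSub Ci a b).length ≤ k

/-- A `k`-suitable collection of directed cycles: all cycles have length at least `8k`
and any two distinct cycles intersect on a directed subpath of at most `k` vertices. -/
def Suitable [DecidableEq V] (A : V → V → Prop) (k : ℕ) (𝒞 : Set (List V)) : Prop :=
  (∀ C ∈ 𝒞, DiCycle A C ∧ 8 * k ≤ C.length) ∧
  ∀ C ∈ 𝒞, ∀ C' ∈ 𝒞, C ≠ C' → (∃ x, x ∈ C ∧ x ∈ C') → ∃ a b, InterPath k C C' a b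

/-- Adjacency in the intersection graph of a collection of cycles. -/
def interRel (𝒞 : Set (List V)) : List V → List V → Prop :=
  fun C C' => C ∈ 𝒞 ∧ C' ∈ 𝒞 ∧ ∃ x, x ∈ C ∧ x ∈ C'

/-- `(a,b)` is an arc of the union of the cycles of `𝒞`. -/
def unionArc (𝒞 : Set (List V)) (a b : V) : Prop := ∃ C ∈ 𝒞, cycArc C a b

/-- A graph is 2-connected. -/
def TwoConnectedG {W : Type*} (G : SimpleGraph W) : Prop :=
  G.Connected ∧ ∀ w : W, (G.induce {u | u ≠ w}).Connected

end Defs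

section GRaux
variable {V : Type u}

variable {V : Type u}

lemma chain_transGen {R : V → V → Prop} : ∀ {l : List V} {a b : V},
    List.Chain R a l → b ∈ l → Relation.TransGen R a b := by
  intro l
  induction l with
  | nil => intro a b _ hb; simp at hb
  | cons c t ih =>
    intro a b hc hb
    replace hc : R a c ∧ List.Chain R c t := List.isChain_cons_cons.mp hc
    rcases List.mem_cons.mp hb with rfl | hb
    · exact .single hc.1
    · exact (ih hc.2 hb).head hc.1

lemma chain'_nodup {R : V → V → Prop} (hirr : Irreflexive (Relation.TransGen R)) :
    ∀ {l : List V}, l.Chain' R → l.Nodup := by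
  intro l
  induction l with
  | nil => intro; exact List.nodup_nil
  | cons x t ih =>
    intro hc
    have hch : List.Chain R x t := hc
    exact List.nodup_cons.mpr ⟨fun hx => hirr x (chain_transGen hch hx), ih hc.tail⟩

lemma transGen_union {R : V → V → Prop} {u v a b : V}
    (h : Relation.TransGen (fun x y => R x y ∨ (x = u ∧ y = v)) a b) :
    Relation.TransGen R a b ∨
      (Relation.ReflTransGen R a u ∧ Relation.ReflTransGen R v b) := by
  induction h with
  | single hc =>
    rcases hc with h | ⟨rfl, rfl⟩
    · exact Or.inl (.single h)
    · exact Or.inr ⟨.refl, .refl⟩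
  | tail hab hbc ih =>
    rcases hbc with h | ⟨rfl, rfl⟩
    · rcases ih with ih | ⟨h1, h2⟩
      · exact Or.inl (ih.tail h)
      · exact Or.inr ⟨h1, h2.tail h⟩
    · rcases ih with ih | ⟨h1, h2⟩
      · exact Or.inr ⟨ih.to_reflTransGen, .refl⟩
      · exact Or.inr ⟨h1, .refl⟩
end GRaux

/-- Gallai–Hasse–Roy–Vitaver: a digraph with chromatic number at least `k`
contains a directed path on `k` vertices. -/
theorem stmt5 {V : Type u} [Fintype V] (A : V → V → Prop) (k : ℕ)
    (h : (k : ℕ∞) ≤ dchrom A) :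
    ∃ l : List V, l.Chain' A ∧ l.Nodup ∧ l.length = k := by
  classical
  by_cases hk0 : k = 0
  · subst hk0; exact ⟨[], List.IsChain.nil, List.nodup_nil, rfl⟩
  have hk1 : 1 ≤ k := Nat.one_le_iff_ne_zero.mpr hk0
  have hNE : Nonempty V := by
    by_contra hE
    rw [not_nonempty_iff] at hE
    have hc : (SimpleGraph.fromRel A).Colorable 0 :=
      ⟨SimpleGraph.Coloring.mk (fun v => isEmptyElim v) (fun {a} _ _ => isEmptyElim a)⟩
    have h3 : (k : ℕ∞) ≤ 0 := le_trans h (by unfold dchrom; exact_mod_cast hc.chromaticNumber_le)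
    have : k = 0 := by exact_mod_cast le_antisymm h3 zero_le
    exact hk0 this
  set S : Set (V → V → Prop) :=
    {R | (∀ a b, R a b → A a b) ∧ Irreflexive (Relation.TransGen R)} with hS
  have hbot : (fun _ _ => False) ∈ S := by
    refine ⟨fun a b hf => hf.elim, fun x hx => ?_⟩
    cases hx with
    | single h => exact h
    | tail _ h => exact h
  obtain ⟨A', hA'S, hmax⟩ := Set.Finite.exists_maximalFor id S (Set.toFinite S) ⟨_, hbot⟩
  obtain ⟨hsub, hirr⟩ := hA'S
  have hkey : ∀ u v : V, A u v → ¬ A' u v → Relation.ReflTransGen A' v u := by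
    intro u v hA huv
    set R' : V → V → Prop := fun a b => A' a b ∨ (a = u ∧ b = v) with hR'
    have hne : A' ≠ R' := by
      intro he
      exact huv (by rw [he]; exact Or.inr ⟨rfl, rfl⟩)
    have hle : A' ≤ R' := fun a b hab => Or.inl hab
    have hnotS : R' ∉ S := fun hS' => hne (le_antisymm hle (hmax hS' hle))
    have hnirr : ¬ Irreflexive (Relation.TransGen R') := by
      intro hi
      refine hnotS ⟨fun a b hab => ?_, hi⟩
      rcases hab with h1 | ⟨rfl, rfl⟩
      · exact hsub a b h1
      · exact hA
    rw [Irreflexive] at hnirr; push_neg at hnirr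
    obtain ⟨x, hx⟩ := hnirr
    rcases transGen_union hx with hx' | ⟨h1, h2⟩
    · exact absurd hx' (hirr x)
    · exact h2.trans h1
  set P : V → ℕ → Prop :=
    fun v n => ∃ l : List V, l.Chain' A' ∧ l.head? = some v ∧ l.length = n with hPdef
  have hPbound : ∀ v n, P v n → n ≤ Fintype.card V := by
    rintro v n ⟨l, hl, _, rfl⟩
    exact (chain'_nodup hirr hl).length_le_card
  set f : V → ℕ := fun v => Nat.findGreatest (P v) (Fintype.card V) with hfdef
  have hP1 : ∀ v, P v 1 := fun v => ⟨[v], List.isChain_singleton v, rfl, rfl⟩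
  have hf1 : ∀ v, 1 ≤ f v := fun v => Nat.le_findGreatest (hPbound v 1 (hP1 v)) (hP1 v)
  have hfP : ∀ v, P v (f v) := fun v => Nat.findGreatest_spec (hPbound v 1 (hP1 v)) (hP1 v)
  have harc : ∀ u v, A' u v → f v + 1 ≤ f u := by
    intro u v huv
    obtain ⟨l, hl, hh, hlen⟩ := hfP v
    have hP' : P u (f v + 1) := by
      refine ⟨u :: l, List.isChain_cons.mpr ⟨fun w hw => ?_, hl⟩, rfl, by simp [hlen]⟩
      rw [hh, Option.mem_some_iff] at hw
      rw [← hw]; exact huv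
    exact Nat.le_findGreatest (hPbound u _ hP') hP'
  have htg : ∀ u v, Relation.TransGen A' u v → f v < f u := by
    intro u v hvu
    induction hvu with
    | single h => have := harc _ _ h; omega
    | tail hab hbc ih => have := harc _ _ hbc; omega
  by_cases hex : ∃ v, k ≤ f v
  · obtain ⟨v, hv⟩ := hex
    obtain ⟨l, hl, _, hlen⟩ := hfP v
    refine ⟨l.take k, List.IsChain.imp (fun a b => hsub a b) (hl.take k),
      (chain'_nodup hirr hl).sublist (List.take_sublist k l), by simp [hlen]; omega⟩
  push_neg at hex
  exfalso
  have key : ∀ a b, a ≠ b → A a b → f a ≠ f b := by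
    intro a b hne hab
    by_cases h' : A' a b
    · have := harc _ _ h'; omega
    · have hr := hkey a b hab h'
      rcases Relation.reflTransGen_iff_eq_or_transGen.mp hr with heq | htr
      · exact absurd heq hne
      · have := htg _ _ htr; omega
  have hcol : (SimpleGraph.fromRel A).Colorable (k - 1) := by
    refine ⟨SimpleGraph.Coloring.mk
      (fun v => ⟨f v - 1, by have := hf1 v; have := hex v; omega⟩) ?_⟩
    intro a b hab
    rw [SimpleGraph.fromRel_adj] at hab
    have hd : f a ≠ f b := by
      rcases hab.2 with h1 | h1
      · exact key a b hab.1 h1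
      · exact (key b a hab.1.symm h1).symm
    have h1a := hf1 a; have h1b := hf1 b
    simp only [ne_eq, Fin.mk.injEq]
    omega
  have h2 := hcol.chromaticNumber_le
  unfold dchrom at h
  have h3 : (k : ℕ∞) ≤ ((k - 1 : ℕ) : ℕ∞) := le_trans h h2
  have h4 : k ≤ k - 1 := by exact_mod_cast h3
  omega
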